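/- There is an absolute constant C > 0 such that the following holds. Let n and Δ be positive integers, let ∏_{i=1}^n x_i^{α_i} be a monomial of total degree at most Δ, and let t be a real number with t ≥ 2√Δ + 1. Then |E_{x∼N(0,I_{n×n})}[∏_{i=1}^n x_i^{α_i} ∣ ∀i: |x_i| ≤ t] − E_{x∼N(0,I_{n×n})}[∏_{i=1}^n x_i^{α_i}]| ≤ C·2^Δ·Δ^{(Δ+2)/2}·t^Δ·e^{−t²/2}. -/

import Mathlib

open MeasureTheory ProbabilityTheory

/-- The standard Gaussian distribution `N(0, I_{n×n})` on `ℝⁿ`, as the product of `n` copies of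
the standard normal distribution on `ℝ`. -/
noncomputable def stdGaussian (n : ℕ) : Measure (Fin n → ℝ) :=
  Measure.pi fun _ => gaussianReal 0 1

open Real Set
open scoped ENNReal NNReal

-- conversion lemmas
lemma gt_pdf_eq (x : ℝ) : gaussianPDFReal 0 1 x = (Real.sqrt (2*Real.pi))⁻¹ * Real.exp (-(x^2)/2) := by
  simp [gaussianPDFReal]


lemma gt_integral (g : ℝ → ℝ) :
    ∫ x, g x ∂(gaussianReal 0 1) = ∫ x, gaussianPDFReal 0 1 x * g x := by
  rw [gaussianReal_of_var_ne_zero 0 one_ne_zero]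
  have h : gaussianPDF 0 1 = fun x => ((gaussianPDFReal 0 1 x).toNNReal : ℝ≥0∞) := rfl
  rw [h, integral_withDensity_eq_integral_smul
    ((measurable_gaussianPDFReal 0 1).real_toNNReal) g]
  congr 1; ext x
  simp [NNReal.smul_def, Real.coe_toNNReal _ (gaussianPDFReal_nonneg 0 1 x)]

lemma gt_setIntegral (g : ℝ → ℝ) {s : Set ℝ} (hs : MeasurableSet s) :
    ∫ x in s, g x ∂(gaussianReal 0 1) = ∫ x in s, gaussianPDFReal 0 1 x * g x := by
  rw [gaussianReal_of_var_ne_zero 0 one_ne_zero]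
  have h : gaussianPDF 0 1 = fun x => ((gaussianPDFReal 0 1 x).toNNReal : ℝ≥0∞) := rfl
  rw [h, MeasureTheory.restrict_withDensity hs, integral_withDensity_eq_integral_smul
    ((measurable_gaussianPDFReal 0 1).real_toNNReal) g]
  congr 1; ext x
  simp [NNReal.smul_def, Real.coe_toNNReal _ (gaussianPDFReal_nonneg 0 1 x)]

lemma gt_integrable {g : ℝ → ℝ} (hg : AEStronglyMeasurable g (gaussianReal 0 1))
    (h : Integrable (fun x => gaussianPDFReal 0 1 x * g x)) :
    Integrable g (gaussianReal 0 1) := by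
  rw [gaussianReal_of_var_ne_zero 0 one_ne_zero]
  rw [integrable_withDensity_iff (measurable_gaussianPDF 0 1)
    (Filter.Eventually.of_forall fun x => ENNReal.ofReal_lt_top)]
  refine h.congr (Filter.Eventually.of_forall fun x => ?_)
  simp [gaussianPDF, ENNReal.toReal_ofReal (gaussianPDFReal_nonneg 0 1 x), mul_comm]

lemma gt_integrable_pow_exp (k : ℕ) :
    Integrable (fun x : ℝ => x^k * Real.exp (-(x^2)/2)) := by
  have h := integrable_rpow_mul_exp_neg_mul_sq (b := 1/2) (by norm_num)
    (s := (k:ℝ)) (lt_of_lt_of_le neg_one_lt_zero (Nat.cast_nonneg k))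
  refine h.congr (Filter.Eventually.of_forall fun x => ?_)
  simp only [Real.rpow_natCast]
  ring_nf

lemma gt_integrable_abspow_exp (k : ℕ) :
    Integrable (fun x : ℝ => |x|^k * Real.exp (-(x^2)/2)) := by
  refine (gt_integrable_pow_exp k).abs.congr (Filter.Eventually.of_forall fun x => ?_)
  simp only [abs_mul, abs_pow, Real.abs_exp]

lemma gt_integrable_exp_quarter_vol :
    Integrable (fun x : ℝ => Real.exp (-(x^2)/4)) := by
  refine (integrable_exp_neg_mul_sq (b := 1/4) (by norm_num)).congr
    (Filter.Eventually.of_forall fun x => ?_)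
  ring_nf
lemma gt_integrable_pow (k : ℕ) : Integrable (fun x : ℝ => x^k) (gaussianReal 0 1) := by
  refine gt_integrable ((measurable_id.pow_const k).aestronglyMeasurable) ?_
  refine (((gt_integrable_pow_exp k).const_mul ((Real.sqrt (2*Real.pi))⁻¹)).congr
    (Filter.Eventually.of_forall fun x => ?_))
  simp only [gt_pdf_eq]; ring

lemma gt_integrable_abspow (k : ℕ) : Integrable (fun x : ℝ => |x|^k) (gaussianReal 0 1) := by
  refine gt_integrable ((measurable_id.abs.pow_const k).aestronglyMeasurable) ?_
  refine (((gt_integrable_abspow_exp k).const_mul ((Real.sqrt (2*Real.pi))⁻¹)).congr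
    (Filter.Eventually.of_forall fun x => ?_))
  simp only [gt_pdf_eq]; ring

lemma gt_integrable_expq : Integrable (fun x : ℝ => Real.exp (x^2/4)) (gaussianReal 0 1) := by
  refine gt_integrable ((Real.measurable_exp.comp ((measurable_id.pow_const 2).div_const 4)).aestronglyMeasurable) ?_
  refine ((gt_integrable_exp_quarter_vol.const_mul ((Real.sqrt (2*Real.pi))⁻¹)).congr
    (Filter.Eventually.of_forall fun x => ?_))
  simp only [gt_pdf_eq, mul_assoc, ← Real.exp_add]
  ring_nf

lemma gt_exp_quarter : ∫ x, Real.exp (x^2/4) ∂(gaussianReal 0 1) = Real.sqrt 2 := by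
  rw [gt_integral]
  have h : ∀ x : ℝ, gaussianPDFReal 0 1 x * Real.exp (x^2/4)
      = (Real.sqrt (2*Real.pi))⁻¹ * Real.exp (-(1/4) * x^2) := by
    intro x; rw [gt_pdf_eq, mul_assoc, ← Real.exp_add]; ring_nf
  simp_rw [h]
  rw [integral_const_mul, integral_gaussian]
  rw [show Real.pi / (1/4) = 2*(2*Real.pi) by ring, Real.sqrt_mul (by norm_num)]
  have : Real.sqrt (2*Real.pi) ≠ 0 := by positivity
  field_simp
  rw [Real.sqrt_mul (by positivity), Real.sq_sqrt (by norm_num), Real.sqrt_sq (by norm_num)]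
lemma gt_sqrt_pow {a : ℝ} (ha : 0 ≤ a) (k : ℕ) : Real.sqrt (a^k) = Real.sqrt a ^ k := by
  induction k with
  | zero => simp
  | succ n ih => rw [pow_succ, pow_succ, Real.sqrt_mul (pow_nonneg ha n), ih]

lemma gt_pointwise {k Δ : ℕ} (hkΔ : k ≤ Δ) (x : ℝ) :
    |x|^k ≤ Real.sqrt Δ ^ k * Real.exp (x^2/4) := by
  rcases Nat.eq_zero_or_pos k with hk | hk
  · subst hk
    simpa using Real.one_le_exp (by positivity)
  · have hΔ : 1 ≤ Δ := le_trans hk hkΔ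
    have e2 : (2:ℝ) ≤ Real.exp 1 := by
      have := Real.add_one_le_exp 1; linarith
    have hk0 : (0:ℝ) < 2*k := by positivity
    have hkne : (k:ℝ) ≠ 0 := Nat.cast_ne_zero.mpr hk.ne'
    have h1 : x^2 ≤ 2*k * Real.exp (x^2/(2*(k:ℝ)) - 1) := by
      have h2 := Real.add_one_le_exp (x^2/(2*(k:ℝ)) - 1)
      have h3 : x^2/(2*(k:ℝ)) ≤ Real.exp (x^2/(2*(k:ℝ)) - 1) := by linarith
      calc x^2 = 2*(k:ℝ) * (x^2/(2*(k:ℝ))) := by field_simp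
        _ ≤ 2*k * Real.exp (x^2/(2*(k:ℝ)) - 1) :=
          mul_le_mul_of_nonneg_left h3 hk0.le
    have hbase : 2*(k:ℝ) * Real.exp (x^2/(2*(k:ℝ)) - 1)
        ≤ (Δ:ℝ) * Real.exp (x^2/(2*(k:ℝ))) := by
      rw [Real.exp_sub]
      have hE : (0:ℝ) < Real.exp (x^2/(2*(k:ℝ))) := Real.exp_pos _
      have hkΔ' : (k:ℝ) ≤ (Δ:ℝ) := by exact_mod_cast hkΔ
      rw [div_eq_mul_inv]
      have hinv : (Real.exp 1)⁻¹ ≤ 1/2 := by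
        rw [inv_le_comm₀ (Real.exp_pos 1) (by norm_num)]
        simpa using e2
      calc 2*(k:ℝ) * (Real.exp (x^2/(2*(k:ℝ))) * (Real.exp 1)⁻¹)
          ≤ 2*(k:ℝ) * (Real.exp (x^2/(2*(k:ℝ))) * (1/2)) := by
            apply mul_le_mul_of_nonneg_left _ hk0.le
            exact mul_le_mul_of_nonneg_left hinv hE.le
        _ = (k:ℝ) * Real.exp (x^2/(2*(k:ℝ))) := by ring
        _ ≤ (Δ:ℝ) * Real.exp (x^2/(2*(k:ℝ))) :=
            mul_le_mul_of_nonneg_right hkΔ' hE.le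
    have h7 : (x^2)^k ≤ (Δ:ℝ)^k * Real.exp (x^2/2) := by
      calc (x^2)^k ≤ ((Δ:ℝ) * Real.exp (x^2/(2*(k:ℝ))))^k :=
            pow_le_pow_left₀ (sq_nonneg x) (h1.trans hbase) k
        _ = (Δ:ℝ)^k * Real.exp (x^2/2) := by
            rw [mul_pow, ← Real.exp_nat_mul]
            congr 2
            field_simp
    have hL : |x|^k = Real.sqrt ((x^2)^k) := by
      rw [gt_sqrt_pow (sq_nonneg x), Real.sqrt_sq_eq_abs]
    have hR : Real.sqrt Δ ^ k * Real.exp (x^2/4) = Real.sqrt ((Δ:ℝ)^k * Real.exp (x^2/2)) := by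
      rw [Real.sqrt_mul (by positivity), gt_sqrt_pow (Nat.cast_nonneg Δ)]
      congr 1
      rw [show x^2/2 = x^2/4 + x^2/4 by ring, Real.exp_add,
        Real.sqrt_mul_self (Real.exp_pos _).le]
    rw [hL, hR]
    exact Real.sqrt_le_sqrt h7

lemma gt_abs_moment {k Δ : ℕ} (hkΔ : k ≤ Δ) :
    ∫ x, |x|^k ∂(gaussianReal 0 1) ≤ Real.sqrt 2 * Real.sqrt Δ ^ k := by
  calc ∫ x, |x|^k ∂(gaussianReal 0 1)
      ≤ ∫ x, Real.sqrt Δ ^ k * Real.exp (x^2/4) ∂(gaussianReal 0 1) :=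
        integral_mono (gt_integrable_abspow k) (gt_integrable_expq.const_mul _)
          (fun x => gt_pointwise hkΔ x)
    _ = Real.sqrt Δ ^ k * Real.sqrt 2 := by rw [integral_const_mul, gt_exp_quarter]
    _ = Real.sqrt 2 * Real.sqrt Δ ^ k := mul_comm _ _
lemma gt_t_facts {Δ : ℕ} {t : ℝ} (hΔ : 1 ≤ Δ) (ht : 2*Real.sqrt Δ + 1 ≤ t) :
    3 ≤ t ∧ 4*(Δ:ℝ) ≤ t^2 := by
  have h1 : (1:ℝ) ≤ Real.sqrt Δ := by
    rw [show (1:ℝ) = Real.sqrt 1 by simp]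
    exact Real.sqrt_le_sqrt (by exact_mod_cast hΔ)
  have h2 : Real.sqrt Δ ^ 2 = (Δ:ℝ) := Real.sq_sqrt (Nat.cast_nonneg Δ)
  constructor
  · linarith
  · nlinarith [Real.sqrt_nonneg (Δ:ℝ)]

lemma gt_core_tail {k Δ : ℕ} {t : ℝ} (hkΔ : k ≤ Δ) (hΔ : 1 ≤ Δ)
    (ht : 2*Real.sqrt Δ + 1 ≤ t) :
    ∫ x in Ioi t, x^k * Real.exp (-(x^2)/2) ≤ t^k * Real.exp (-(t^2)/2) := by
  obtain ⟨ht3, htΔ⟩ := gt_t_facts hΔ ht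
  have htpos : (0:ℝ) < t := by linarith
  set a : ℝ := t - k/t with ha_def
  have hkt : (k:ℝ)/t ≤ t/4 := by
    rw [div_le_div_iff₀ htpos (by norm_num)]
    have : (k:ℝ) ≤ (Δ:ℝ) := by exact_mod_cast hkΔ
    nlinarith
  have ha : 9/4 ≤ a := by
    have : 3*t/4 ≤ a := by rw [ha_def]; linarith
    linarith
  have ha0 : (0:ℝ) < a := lt_of_lt_of_le (by norm_num) ha
  set K : ℝ := Real.exp (-(t^2)/2) with hK_def
  have hKpos : 0 < K := Real.exp_pos _
  have hpt : ∀ x ∈ Ioi t, x^k * Real.exp (-(x^2)/2)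
      ≤ t^k * K * (Real.exp (a*t) * Real.exp (-(a*x))) := by
    intro x hx
    rw [mem_Ioi] at hx
    have hx0 : (0:ℝ) < x := lt_trans htpos hx
    have p1 : x^k ≤ t^k * Real.exp ((k/t)*(x-t)) := by
      have q1 : x ≤ t * Real.exp ((x-t)/t) := by
        have := Real.add_one_le_exp ((x-t)/t)
        calc x = t * ((x-t)/t + 1) := by field_simp; ring
          _ ≤ t * Real.exp ((x-t)/t) := mul_le_mul_of_nonneg_left this htpos.le
      calc x^k ≤ (t * Real.exp ((x-t)/t))^k := pow_le_pow_left₀ hx0.le q1 k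
        _ = t^k * Real.exp ((k/t)*(x-t)) := by
            rw [mul_pow, ← Real.exp_nat_mul]
            congr 2
            field_simp
    have p2 : Real.exp (-(x^2)/2) ≤ K * Real.exp (-(t*(x-t))) := by
      rw [hK_def, ← Real.exp_add]
      apply Real.exp_le_exp.mpr
      nlinarith [sq_nonneg (x - t)]
    have e1 : Real.exp ((k/t)*(x-t)) * Real.exp (-(t*(x-t)))
        = Real.exp (a*t) * Real.exp (-(a*x)) := by
      rw [← Real.exp_add, ← Real.exp_add, ha_def]
      congr 1
      field_simp
      ring
    calc x^k * Real.exp (-(x^2)/2)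
        ≤ (t^k * Real.exp ((k/t)*(x-t))) * (K * Real.exp (-(t*(x-t)))) :=
          mul_le_mul p1 p2 (Real.exp_pos _).le (by positivity)
      _ = t^k * K * (Real.exp ((k/t)*(x-t)) * Real.exp (-(t*(x-t)))) := by ring
      _ = t^k * K * (Real.exp (a*t) * Real.exp (-(a*x))) := by rw [e1]
  have hbase : IntegrableOn (fun x : ℝ => Real.exp (-(a*x))) (Ioi t) := by
    simpa [neg_mul] using exp_neg_integrableOn_Ioi t ha0
  have hint : IntegrableOn (fun x => t^k * K * (Real.exp (a*t) * Real.exp (-(a*x)))) (Ioi t) :=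
    (hbase.const_mul (Real.exp (a*t))).const_mul (t^k * K)
  have hmono := setIntegral_mono_on ((gt_integrable_pow_exp k).integrableOn) hint
    measurableSet_Ioi hpt
  refine hmono.trans ?_
  have hcomp : ∫ x in Ioi t, Real.exp (-(a*x)) = a⁻¹ * Real.exp (-(a*t)) := by
    have := integral_comp_mul_left_Ioi (fun y => Real.exp (-y)) t ha0
    simpa [smul_eq_mul, integral_exp_neg_Ioi, integral_exp_Iic] using this
  rw [integral_const_mul, integral_const_mul, hcomp]
  have hval : Real.exp (a*t) * (a⁻¹ * Real.exp (-(a*t))) = a⁻¹ := by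
    rw [show Real.exp (a*t) * (a⁻¹ * Real.exp (-(a*t)))
        = a⁻¹ * (Real.exp (a*t) * Real.exp (-(a*t))) by ring, ← Real.exp_add]
    simp
  rw [hval]
  calc t^k * K * a⁻¹ ≤ t^k * K * 1 := by
        apply mul_le_mul_of_nonneg_left _ (by positivity)
        rw [inv_le_one_iff₀]
        right; exact le_trans (by norm_num : (1:ℝ) ≤ 9/4) ha
    _ = t^k * K := mul_one _
lemma gt_c_le_half : (Real.sqrt (2*Real.pi))⁻¹ ≤ 1/2 := by
  have hpi := Real.pi_gt_three
  have hs := Real.sq_sqrt (by positivity : (0:ℝ) ≤ 2*Real.pi)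
  have hs0 := Real.sqrt_nonneg (2*Real.pi)
  have h2 : 2 ≤ Real.sqrt (2*Real.pi) := by nlinarith
  rw [inv_le_comm₀ (by nlinarith) (by norm_num)]
  simpa using h2

lemma gt_tail {k Δ : ℕ} {t : ℝ} (hkΔ : k ≤ Δ) (hΔ : 1 ≤ Δ)
    (ht : 2*Real.sqrt Δ + 1 ≤ t) :
    ∫ x in (Icc (-t) t)ᶜ, |x|^k ∂(gaussianReal 0 1) ≤ t^k * Real.exp (-(t^2)/2) := by
  obtain ⟨ht3, -⟩ := gt_t_facts hΔ ht
  have ht0 : (0:ℝ) < t := by linarith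
  have hs : MeasurableSet ((Icc (-t) t)ᶜ : Set ℝ) := measurableSet_Icc.compl
  rw [gt_setIntegral _ hs]
  have step1 : ∫ x in (Icc (-t) t)ᶜ, gaussianPDFReal 0 1 x * |x|^k
      = (Real.sqrt (2*Real.pi))⁻¹ * ∫ x in (Icc (-t) t)ᶜ, |x|^k * Real.exp (-(x^2)/2) := by
    rw [← integral_const_mul]
    apply setIntegral_congr_fun hs
    intro x _
    simp only [gt_pdf_eq]; ring
  rw [step1]
  have hmem : ∀ x : ℝ, x ∈ (Icc (-t) t)ᶜ ↔ t < |x| := by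
    intro x
    rw [mem_compl_iff, mem_Icc, ← abs_le, not_le]
  have step2 : ∫ x in (Icc (-t) t)ᶜ, |x|^k * Real.exp (-(x^2)/2)
      = ∫ x, (Ioi t).indicator (fun y => y^k * Real.exp (-(y^2)/2)) |x| := by
    rw [← integral_indicator hs]
    congr 1; ext x
    by_cases hx : x ∈ (Icc (-t) t)ᶜ
    · rw [indicator_of_mem hx, indicator_of_mem (mem_Ioi.mpr ((hmem x).mp hx))]
      simp only [sq_abs]
    · rw [indicator_of_notMem hx,
        indicator_of_notMem (fun h => hx ((hmem x).mpr (mem_Ioi.mp h)))]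
  have step3 : (∫ x, (Ioi t).indicator (fun y => y^k * Real.exp (-(y^2)/2)) |x|)
      = 2 * ∫ x in Ioi t, x^k * Real.exp (-(x^2)/2) := by
    rw [integral_comp_abs (f := (Ioi t).indicator (fun y => y^k * Real.exp (-(y^2)/2)))]
    congr 1
    rw [setIntegral_indicator measurableSet_Ioi,
      show Ioi (0:ℝ) ∩ Ioi t = Ioi t from inter_eq_right.mpr (Ioi_subset_Ioi ht0.le)]
  rw [step2, step3]
  have hcore := gt_core_tail hkΔ hΔ ht
  have hnn : 0 ≤ ∫ x in Ioi t, x^k * Real.exp (-(x^2)/2) :=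
    setIntegral_nonneg measurableSet_Ioi
      (fun x hx => by
        have : (0:ℝ) < x := lt_trans ht0 (mem_Ioi.mp hx)
        positivity)
  calc (Real.sqrt (2*Real.pi))⁻¹ * (2 * ∫ x in Ioi t, x^k * Real.exp (-(x^2)/2))
      ≤ (1/2) * (2 * ∫ x in Ioi t, x^k * Real.exp (-(x^2)/2)) := by
        apply mul_le_mul_of_nonneg_right gt_c_le_half (by linarith)
    _ = ∫ x in Ioi t, x^k * Real.exp (-(x^2)/2) := by ring
    _ ≤ t^k * Real.exp (-(t^2)/2) := hcore
lemma gt_exp_small {Δ : ℕ} {t : ℝ} (hΔ : 1 ≤ Δ) (ht : 2*Real.sqrt Δ + 1 ≤ t) :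
    Real.exp (-(t^2)/2) ≤ 1/10 := by
  obtain ⟨ht3, -⟩ := gt_t_facts hΔ ht
  have e2 : (2:ℝ) ≤ Real.exp 1 := by
    have := Real.add_one_le_exp 1; linarith
  have h1 : Real.exp (-(t^2)/2) ≤ Real.exp (-(9:ℝ)/2) := by
    apply Real.exp_le_exp.mpr
    nlinarith
  refine h1.trans ?_
  have h2 : (10:ℝ) ≤ Real.exp ((9:ℝ)/2) := by
    have h3 : Real.exp 4 ≤ Real.exp ((9:ℝ)/2) := Real.exp_le_exp.mpr (by norm_num)
    have h4 : ((2:ℝ))^4 ≤ Real.exp 1 ^ 4 := pow_le_pow_left₀ (by norm_num) e2 4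
    have h5 : Real.exp 1 ^ 4 = Real.exp 4 := by
      rw [← Real.exp_nat_mul]; norm_num
    nlinarith
  rw [show ((-9:ℝ))/2 = -((9:ℝ)/2) by norm_num, Real.exp_neg,
    inv_le_comm₀ (Real.exp_pos _) (by norm_num)]
  simpa using h2

lemma gt_one_sub_p {Δ : ℕ} {t : ℝ} (hΔ : 1 ≤ Δ) (ht : 2*Real.sqrt Δ + 1 ≤ t) :
    1 - ((gaussianReal 0 1) (Icc (-t) t)).toReal ≤ Real.exp (-(t^2)/2) := by
  have hcompl : ((gaussianReal 0 1) ((Icc (-t) t)ᶜ)).toReal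
      = 1 - ((gaussianReal 0 1) (Icc (-t) t)).toReal := by
    rw [measure_compl measurableSet_Icc (measure_ne_top _ _), measure_univ,
      ENNReal.toReal_sub_of_le prob_le_one ENNReal.one_ne_top, ENNReal.toReal_one]
  rw [← hcompl]
  have h0 : ((gaussianReal 0 1) ((Icc (-t) t)ᶜ)).toReal
      = ∫ x in (Icc (-t) t)ᶜ, |x|^(0:ℕ) ∂(gaussianReal 0 1) := by
    simp [setIntegral_const, measureReal_def]
  rw [h0]
  simpa using gt_tail (Nat.zero_le Δ) hΔ ht

lemma gt_p_bounds {Δ : ℕ} {t : ℝ} (hΔ : 1 ≤ Δ) (ht : 2*Real.sqrt Δ + 1 ≤ t) :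
    9/10 ≤ ((gaussianReal 0 1) (Icc (-t) t)).toReal ∧
    ((gaussianReal 0 1) (Icc (-t) t)).toReal ≤ 1 := by
  have h1 := gt_one_sub_p hΔ ht
  have h2 := gt_exp_small hΔ ht
  have h3 : ((gaussianReal 0 1) (Icc (-t) t)).toReal ≤ 1 := by
    rw [← ENNReal.toReal_one]
    exact ENNReal.toReal_mono ENNReal.one_ne_top prob_le_one
  exact ⟨by linarith, h3⟩
lemma gt_sqrt2_le : Real.sqrt 2 ≤ 3/2 := by
  rw [show (3/2:ℝ) = Real.sqrt ((3/2)^2) from (Real.sqrt_sq (by norm_num)).symm]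
  exact Real.sqrt_le_sqrt (by norm_num)

lemma gt_abs_int {f : ℝ → ℝ} {μ : Measure ℝ} : |∫ x, f x ∂μ| ≤ ∫ x, |f x| ∂μ := by
  simpa [Real.norm_eq_abs] using norm_integral_le_integral_norm (μ := μ) f

lemma gt_sqrtΔ_ge_one {Δ : ℕ} (hΔ : 1 ≤ Δ) : (1:ℝ) ≤ Real.sqrt Δ := by
  rw [show (1:ℝ) = Real.sqrt 1 by simp]
  exact Real.sqrt_le_sqrt (by exact_mod_cast hΔ)

lemma gt_key {k Δ : ℕ} {t : ℝ} (hkΔ : k ≤ Δ) (hΔ : 1 ≤ Δ)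
    (ht : 2*Real.sqrt Δ + 1 ≤ t) :
    |(∫ x in Icc (-t) t, x^k ∂(gaussianReal 0 1)) /
        ((gaussianReal 0 1) (Icc (-t) t)).toReal - ∫ x, x^k ∂(gaussianReal 0 1)|
      ≤ (k:ℝ) * (4 * t^Δ * Real.exp (-(t^2)/2)) ∧
    |(∫ x in Icc (-t) t, x^k ∂(gaussianReal 0 1)) /
        ((gaussianReal 0 1) (Icc (-t) t)).toReal| ≤ (2*Real.sqrt Δ)^k ∧
    |∫ x, x^k ∂(gaussianReal 0 1)| ≤ (2*Real.sqrt Δ)^k := by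
  obtain ⟨ht3, -⟩ := gt_t_facts hΔ ht
  obtain ⟨hp9, hp1⟩ := gt_p_bounds hΔ ht
  have hKsmall := gt_exp_small hΔ ht
  have hKpos : (0:ℝ) < Real.exp (-(t^2)/2) := Real.exp_pos _
  set p : ℝ := ((gaussianReal 0 1) (Icc (-t) t)).toReal with hp_def
  set Mk : ℝ := ∫ x in Icc (-t) t, x^k ∂(gaussianReal 0 1) with hMk_def
  set mk : ℝ := ∫ x, x^k ∂(gaussianReal 0 1) with hmk_def
  set K : ℝ := Real.exp (-(t^2)/2) with hK_def
  have hppos : (0:ℝ) < p := lt_of_lt_of_le (by norm_num) hp9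
  have hs : MeasurableSet (Icc (-t) t : Set ℝ) := measurableSet_Icc
  -- absolute moment control
  have habs : ∫ x, |x|^k ∂(gaussianReal 0 1) ≤ Real.sqrt 2 * Real.sqrt Δ ^ k :=
    gt_abs_moment hkΔ
  have habs_nonneg : 0 ≤ ∫ x, |x|^k ∂(gaussianReal 0 1) :=
    integral_nonneg (fun x => by positivity)
  have hm_le : |mk| ≤ ∫ x, |x|^k ∂(gaussianReal 0 1) := by
    rw [hmk_def]
    refine (gt_abs_int).trans ?_
    apply le_of_eq
    congr 1; ext x; rw [abs_pow]
  have hM_le : |Mk| ≤ ∫ x, |x|^k ∂(gaussianReal 0 1) := by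
    rw [hMk_def]
    refine (gt_abs_int).trans ?_
    have e1 : ∫ x in Icc (-t) t, |x^k| ∂(gaussianReal 0 1)
        = ∫ x in Icc (-t) t, |x|^k ∂(gaussianReal 0 1) := by
      congr 1; ext x; rw [abs_pow]
    rw [e1]
    exact setIntegral_le_integral (gt_integrable_abspow k)
      (Filter.Eventually.of_forall (fun x => by positivity))
  -- tail control
  have htail : |mk - Mk| ≤ t^k * K := by
    have hsplit := integral_add_compl hs (gt_integrable_pow k)
    have e1 : mk - Mk = ∫ x in (Icc (-t) t)ᶜ, x^k ∂(gaussianReal 0 1) := by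
      rw [hmk_def, hMk_def, ← hsplit]; ring
    rw [e1]
    refine (gt_abs_int).trans ?_
    have e2 : ∫ x in (Icc (-t) t)ᶜ, |x^k| ∂(gaussianReal 0 1)
        = ∫ x in (Icc (-t) t)ᶜ, |x|^k ∂(gaussianReal 0 1) := by
      congr 1; ext x; rw [abs_pow]
    rw [e2]
    exact gt_tail hkΔ hΔ ht
  -- basic size comparisons
  have hsqrtΔt : Real.sqrt Δ ^ k ≤ t^k := by
    apply pow_le_pow_left₀ (Real.sqrt_nonneg _)
    nlinarith [Real.sqrt_nonneg (Δ:ℝ)]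
  have htk : t^k ≤ t^Δ := pow_le_pow_right₀ (by linarith) hkΔ
  have hsqrt2 := gt_sqrt2_le
  rcases Nat.eq_zero_or_pos k with hk0 | hkpos
  · -- k = 0 : everything is exact
    subst hk0
    have hM0 : Mk = p := by
      rw [hMk_def, hp_def]
      simp [setIntegral_const, measureReal_def]
    have hm0 : mk = 1 := by
      rw [hmk_def]; simp
    rw [hM0, hm0, div_self hppos.ne']
    simp
  · -- k ≥ 1
    clear_value p Mk mk K
    have hone_le : (1:ℝ) ≤ 2*Real.sqrt Δ := by
      have := gt_sqrtΔ_ge_one hΔ; linarith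
    have hpow_expand : (2*Real.sqrt Δ)^k = 2^k * Real.sqrt Δ ^ k := mul_pow 2 _ k
    have h2k : (2:ℝ) ≤ 2^k := by
      calc (2:ℝ) = 2^1 := (pow_one 2).symm
        _ ≤ 2^k := pow_le_pow_right₀ (by norm_num) hkpos
    have hsqk_nonneg : (0:ℝ) ≤ Real.sqrt Δ ^ k := by positivity
    have htΔ0 : (0:ℝ) ≤ t^Δ := pow_nonneg (by linarith) Δ
    have hmb : |mk| ≤ (2*Real.sqrt Δ)^k := by
      rw [hpow_expand]
      calc |mk| ≤ Real.sqrt 2 * Real.sqrt Δ ^ k := hm_le.trans habs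
        _ ≤ 2 * Real.sqrt Δ ^ k :=
            mul_le_mul_of_nonneg_right (hsqrt2.trans (by norm_num)) hsqk_nonneg
        _ ≤ 2^k * Real.sqrt Δ ^ k := mul_le_mul_of_nonneg_right h2k hsqk_nonneg
    have hMb : |Mk / p| ≤ (2*Real.sqrt Δ)^k := by
      rw [abs_div, abs_of_pos hppos, div_le_iff₀ hppos]
      have b1 : Real.sqrt 2 ≤ (9/10) * 2^k := by linarith
      calc |Mk| ≤ Real.sqrt 2 * Real.sqrt Δ ^ k := hM_le.trans habs
        _ ≤ ((9/10) * 2^k) * Real.sqrt Δ ^ k := mul_le_mul_of_nonneg_right b1 hsqk_nonneg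
        _ = (2^k * Real.sqrt Δ ^ k) * (9/10) := by ring
        _ = (2*Real.sqrt Δ)^k * (9/10) := by rw [hpow_expand]
        _ ≤ (2*Real.sqrt Δ)^k * p := by
            apply mul_le_mul_of_nonneg_left hp9 (by positivity)
    have hdiff : |Mk / p - mk| ≤ (k:ℝ) * (4 * t^Δ * K) := by
      have e1 : Mk / p - mk = (Mk - p * mk) / p := by field_simp
      rw [e1, abs_div, abs_of_pos hppos, div_le_iff₀ hppos]
      have h2 : |Mk - p * mk| ≤ |Mk - mk| + (1-p) * |mk| := by
        have e2 : Mk - p * mk = (Mk - mk) + (1-p) * mk := by ring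
        rw [e2]
        refine (abs_add_le _ _).trans ?_
        rw [abs_mul, abs_of_nonneg (by linarith : (0:ℝ) ≤ 1-p)]
      have h3 : |Mk - mk| ≤ t^k * K := by rw [abs_sub_comm]; exact htail
      have h4 : (1-p) * |mk| ≤ K * (Real.sqrt 2 * Real.sqrt Δ ^ k) := by
        rw [hp_def, hK_def]
        exact mul_le_mul (gt_one_sub_p hΔ ht) (hm_le.trans habs) (abs_nonneg _)
          (Real.exp_pos _).le
      have h5 : Real.sqrt 2 * Real.sqrt Δ ^ k ≤ 2 * t^Δ := by
        have a1 : Real.sqrt 2 * Real.sqrt Δ ^ k ≤ (3/2) * t^k :=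
          mul_le_mul hsqrt2 hsqrtΔt hsqk_nonneg (by norm_num)
        have a2 : (3/2:ℝ) * t^k ≤ (3/2) * t^Δ :=
          mul_le_mul_of_nonneg_left htk (by norm_num)
        linarith
      have h4' : (1-p) * |mk| ≤ K * (2 * t^Δ) :=
        h4.trans (mul_le_mul_of_nonneg_left h5 hKpos.le)
      have htkK : t^k * K ≤ t^Δ * K := mul_le_mul_of_nonneg_right htk hKpos.le
      have h6 : |Mk - p * mk| ≤ 3 * (t^Δ * K) := by
        have := h2.trans (add_le_add (h3.trans htkK) h4')
        calc |Mk - p * mk| ≤ t^Δ * K + K * (2*t^Δ) := this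
          _ = 3 * (t^Δ * K) := by ring
      have hk1 : (1:ℝ) ≤ (k:ℝ) := by exact_mod_cast hkpos
      have hbase : (0:ℝ) ≤ t^Δ * K := mul_nonneg htΔ0 hKpos.le
      calc |Mk - p*mk| ≤ 3 * (t^Δ * K) := h6
        _ ≤ (18/5) * (t^Δ * K) := by linarith
        _ ≤ (k:ℝ) * ((18/5) * (t^Δ * K)) :=
            le_mul_of_one_le_left (by positivity) hk1
        _ = (k:ℝ) * (4 * t^Δ * K) * (9/10) := by ring
        _ ≤ (k:ℝ) * (4 * t^Δ * K) * p := by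
            apply mul_le_mul_of_nonneg_left hp9 (by positivity)
    exact ⟨hdiff, hMb, hmb⟩
lemma gt_prod_diff {ι : Type*} [DecidableEq ι] (s : Finset ι) (a b c : ι → ℝ)
    (hc : ∀ i, 1 ≤ c i) (ha : ∀ i ∈ s, |a i| ≤ c i) (hb : ∀ i ∈ s, |b i| ≤ c i) :
    |(∏ i ∈ s, a i) - ∏ i ∈ s, b i| ≤ (∑ i ∈ s, |a i - b i|) * ∏ i ∈ s, c i := by
  induction s using Finset.induction_on with
  | empty => simp
  | @insert j s hj ih =>
    have hc0 : ∀ i, (0:ℝ) ≤ c i := fun i => le_trans zero_le_one (hc i)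
    have hC1 : (1:ℝ) ≤ ∏ i ∈ s, c i := by
      calc (1:ℝ) = ∏ _i ∈ s, (1:ℝ) := Finset.prod_const_one.symm
        _ ≤ ∏ i ∈ s, c i := Finset.prod_le_prod (fun _ _ => zero_le_one) (fun i _ => hc i)
    have hC0 : (0:ℝ) ≤ ∏ i ∈ s, c i := le_trans zero_le_one hC1
    have haA : |∏ i ∈ s, a i| ≤ ∏ i ∈ s, c i := by
      rw [Finset.abs_prod]
      exact Finset.prod_le_prod (fun i _ => abs_nonneg _)
        (fun i hi => ha i (Finset.mem_insert_of_mem hi))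
    have hihyp := ih (fun i hi => ha i (Finset.mem_insert_of_mem hi))
      (fun i hi => hb i (Finset.mem_insert_of_mem hi))
    rw [Finset.prod_insert hj, Finset.prod_insert hj, Finset.prod_insert hj,
      Finset.sum_insert hj]
    have key : a j * ∏ i ∈ s, a i - b j * ∏ i ∈ s, b i
        = (a j - b j) * ∏ i ∈ s, a i + b j * ((∏ i ∈ s, a i) - ∏ i ∈ s, b i) := by ring
    rw [key]
    refine (abs_add_le _ _).trans ?_
    rw [abs_mul, abs_mul]
    have t1 : |a j - b j| * |∏ i ∈ s, a i| ≤ |a j - b j| * (c j * ∏ i ∈ s, c i) := by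
      apply mul_le_mul_of_nonneg_left _ (abs_nonneg _)
      calc |∏ i ∈ s, a i| ≤ ∏ i ∈ s, c i := haA
        _ ≤ c j * ∏ i ∈ s, c i := le_mul_of_one_le_left hC0 (hc j)
    have t2 : |b j| * |(∏ i ∈ s, a i) - ∏ i ∈ s, b i|
        ≤ c j * ((∑ i ∈ s, |a i - b i|) * ∏ i ∈ s, c i) :=
      mul_le_mul (hb j (Finset.mem_insert_self j s)) hihyp (abs_nonneg _) (hc0 j)
    calc |a j - b j| * |∏ i ∈ s, a i| + |b j| * |(∏ i ∈ s, a i) - ∏ i ∈ s, b i|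
        ≤ |a j - b j| * (c j * ∏ i ∈ s, c i)
          + c j * ((∑ i ∈ s, |a i - b i|) * ∏ i ∈ s, c i) := add_le_add t1 t2
      _ = (|a j - b j| + ∑ i ∈ s, |a i - b i|) * (c j * ∏ i ∈ s, c i) := by ring

lemma gt_pi_integral {n : ℕ} (f : Fin n → ℝ → ℝ) :
    ∫ x : Fin n → ℝ, ∏ i, f i (x i) ∂(Measure.pi fun _ => gaussianReal 0 1)
      = ∏ i, ∫ y, f i y ∂(gaussianReal 0 1) := by
  letI : MeasureSpace ℝ := ⟨gaussianReal 0 1⟩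
  haveI : SigmaFinite (volume : Measure ℝ) :=
    inferInstanceAs (SigmaFinite (gaussianReal 0 1))
  exact MeasureTheory.integral_fintype_prod_eq_prod f

lemma gt_rpow_id {Δ : ℕ} : Real.sqrt Δ ^ Δ * (Δ:ℝ) = (Δ:ℝ) ^ (((Δ:ℝ)+2)/2) := by
  have h0 : (0:ℝ) ≤ (Δ:ℝ) := Nat.cast_nonneg Δ
  have e1 : ((Δ:ℝ)+2)/2 = (1/2 : ℝ) * ((Δ+2 : ℕ) : ℝ) := by push_cast; ring
  rw [e1, Real.rpow_mul h0, ← Real.sqrt_eq_rpow, Real.rpow_natCast, pow_add,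
    Real.sq_sqrt h0]
/-- **Truncation does not change Gaussian moments much.** There is an absolute constant `C > 0`
such that for all positive integers `n, Δ`, every monomial `∏ᵢ xᵢ^{αᵢ}` of total degree at most
`Δ`, and every real `t ≥ 2√Δ + 1`,
`|E_{x∼N(0,I)}[∏ xᵢ^{αᵢ} ∣ ∀ i, |xᵢ| ≤ t] − E_{x∼N(0,I)}[∏ xᵢ^{αᵢ}]|
  ≤ C · 2^Δ · Δ^{(Δ+2)/2} · t^Δ · e^{−t²/2}`.
The conditional expectation is written as the integral over the truncation event divided by the
probability of that event. -/
theorem gaussian_truncation_moment_close :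
    ∃ C : ℝ, 0 < C ∧
      ∀ (n Δ : ℕ), 0 < n → 0 < Δ →
        ∀ (α : Fin n → ℕ), (∑ i, α i) ≤ Δ →
          ∀ t : ℝ, 2 * Real.sqrt Δ + 1 ≤ t →
            |(∫ x in {x : Fin n → ℝ | ∀ i, |x i| ≤ t}, ∏ i, (x i) ^ (α i) ∂(stdGaussian n)) /
                ((stdGaussian n) {x : Fin n → ℝ | ∀ i, |x i| ≤ t}).toReal
              - ∫ x, ∏ i, (x i) ^ (α i) ∂(stdGaussian n)|
            ≤ C * 2 ^ Δ * (Δ : ℝ) ^ (((Δ : ℝ) + 2) / 2) * t ^ Δ * Real.exp (-(t ^ 2) / 2) := by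
  refine ⟨4, by norm_num, ?_⟩
  intro n Δ hn hΔ α hα t ht
  have hΔ1 : 1 ≤ Δ := hΔ
  obtain ⟨ht3, -⟩ := gt_t_facts hΔ1 ht
  have hαi : ∀ i, α i ≤ Δ := fun i =>
    le_trans (Finset.single_le_sum (fun j _ => Nat.zero_le (α j)) (Finset.mem_univ i)) hα
  have hS_eq : {x : Fin n → ℝ | ∀ i, |x i| ≤ t}
      = Set.pi univ (fun _ : Fin n => Icc (-t) t) := by
    ext x
    simp only [mem_setOf_eq, Set.mem_pi, mem_univ, forall_true_left, mem_Icc, abs_le,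
      true_implies]
  have hS_m : MeasurableSet {x : Fin n → ℝ | ∀ i, |x i| ≤ t} := by
    rw [hS_eq]; exact MeasurableSet.univ_pi (fun _ => measurableSet_Icc)
  -- numerator factorization
  have hnum : (∫ x in {x : Fin n → ℝ | ∀ i, |x i| ≤ t}, ∏ i, (x i)^(α i) ∂(stdGaussian n))
      = ∏ i, ∫ y in Icc (-t) t, y^(α i) ∂(gaussianReal 0 1) := by
    rw [← integral_indicator hS_m]
    have hind : ∀ x : Fin n → ℝ,
        ({x : Fin n → ℝ | ∀ i, |x i| ≤ t}).indicator (fun x => ∏ i, (x i)^(α i)) x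
          = ∏ i, (Icc (-t) t).indicator (fun y => y^(α i)) (x i) := by
      intro x
      by_cases hx : x ∈ {x : Fin n → ℝ | ∀ i, |x i| ≤ t}
      · rw [indicator_of_mem hx]
        refine Finset.prod_congr rfl (fun i _ => ?_)
        rw [indicator_of_mem (by rw [mem_Icc, ← abs_le]; exact hx i)]
      · rw [indicator_of_notMem hx]
        have hx' : ∃ i, ¬ |x i| ≤ t := by
          by_contra h
          push_neg at h
          exact hx (fun i => h i)
        obtain ⟨i, hi⟩ := hx'
        refine (Finset.prod_eq_zero (Finset.mem_univ i) ?_).symm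
        rw [indicator_of_notMem (fun h => hi (by rw [abs_le, ← mem_Icc]; exact h))]
    simp_rw [hind]
    rw [show stdGaussian n = Measure.pi (fun _ => gaussianReal 0 1) from rfl,
      gt_pi_integral (fun i y => (Icc (-t) t).indicator (fun z => z^(α i)) y)]
    exact Finset.prod_congr rfl (fun i _ => integral_indicator measurableSet_Icc)
  -- full-space factorization
  have hful : (∫ x, ∏ i, (x i)^(α i) ∂(stdGaussian n))
      = ∏ i, ∫ y, y^(α i) ∂(gaussianReal 0 1) := by
    rw [show stdGaussian n = Measure.pi (fun _ => gaussianReal 0 1) from rfl,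
      gt_pi_integral (fun i y => y^(α i))]
  have hmeas : ((stdGaussian n) {x : Fin n → ℝ | ∀ i, |x i| ≤ t}).toReal
      = ∏ _i : Fin n, ((gaussianReal 0 1) (Icc (-t) t)).toReal := by
    rw [hS_eq, show stdGaussian n = Measure.pi (fun _ => gaussianReal 0 1) from rfl,
      Measure.pi_pi, ENNReal.toReal_prod]
  rw [hnum, hful, hmeas, ← Finset.prod_div_distrib]
  -- apply the telescoping bound
  set p : ℝ := ((gaussianReal 0 1) (Icc (-t) t)).toReal with hp_def
  set K : ℝ := Real.exp (-(t^2)/2) with hK_def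
  have hKpos : (0:ℝ) < K := Real.exp_pos _
  have hone_le : (1:ℝ) ≤ 2*Real.sqrt Δ := by
    have := gt_sqrtΔ_ge_one hΔ1; linarith
  have hkey := fun i => gt_key (hαi i) hΔ1 ht
  have htele := gt_prod_diff (Finset.univ : Finset (Fin n))
    (fun i => (∫ y in Icc (-t) t, y^(α i) ∂(gaussianReal 0 1)) / p)
    (fun i => ∫ y, y^(α i) ∂(gaussianReal 0 1))
    (fun i => (2*Real.sqrt Δ)^(α i))
    (fun i => one_le_pow₀ hone_le)
    (fun i _ => (hkey i).2.1)
    (fun i _ => (hkey i).2.2)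
  refine htele.trans ?_
  have htΔ0 : (0:ℝ) ≤ t^Δ := pow_nonneg (by linarith) Δ
  -- sum bound
  have hsum : (∑ i, |(∫ y in Icc (-t) t, y^(α i) ∂(gaussianReal 0 1)) / p
        - ∫ y, y^(α i) ∂(gaussianReal 0 1)|)
      ≤ (Δ:ℝ) * (4 * t^Δ * K) := by
    calc (∑ i, |(∫ y in Icc (-t) t, y^(α i) ∂(gaussianReal 0 1)) / p
          - ∫ y, y^(α i) ∂(gaussianReal 0 1)|)
        ≤ ∑ i, (α i : ℝ) * (4 * t^Δ * K) :=
          Finset.sum_le_sum (fun i _ => (hkey i).1)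
      _ = ((∑ i, α i : ℕ) : ℝ) * (4 * t^Δ * K) := by
          rw [← Finset.sum_mul]; push_cast; ring
      _ ≤ (Δ:ℝ) * (4 * t^Δ * K) := by
          apply mul_le_mul_of_nonneg_right _ (by positivity)
          exact_mod_cast hα
  -- product bound
  have hprod : (∏ i, (2*Real.sqrt Δ)^(α i)) ≤ (2*Real.sqrt Δ)^Δ := by
    rw [Finset.prod_pow_eq_pow_sum]
    exact pow_le_pow_right₀ hone_le hα
  have hprod0 : (0:ℝ) ≤ ∏ i, (2*Real.sqrt Δ)^(α i) :=
    Finset.prod_nonneg (fun i _ => pow_nonneg (by linarith) _)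
  have hsum0 : (0:ℝ) ≤ ∑ i, |(∫ y in Icc (-t) t, y^(α i) ∂(gaussianReal 0 1)) / p
      - ∫ y, y^(α i) ∂(gaussianReal 0 1)| :=
    Finset.sum_nonneg (fun i _ => abs_nonneg _)
  calc (∑ i, |(∫ y in Icc (-t) t, y^(α i) ∂(gaussianReal 0 1)) / p
        - ∫ y, y^(α i) ∂(gaussianReal 0 1)|) * ∏ i, (2*Real.sqrt Δ)^(α i)
      ≤ ((Δ:ℝ) * (4 * t^Δ * K)) * (2*Real.sqrt Δ)^Δ :=
        mul_le_mul hsum hprod hprod0 (by positivity)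
    _ = 4 * 2^Δ * (Real.sqrt Δ ^ Δ * (Δ:ℝ)) * t^Δ * K := by
        rw [mul_pow]; ring
    _ = 4 * 2^Δ * (Δ:ℝ) ^ (((Δ:ℝ)+2)/2) * t^Δ * K := by rw [gt_rpow_id]
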